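/- arXiv:0901.4306 — 2 statements merged into one kernel-verified Lean document; each statement's English description precedes it below -/
import Mathlib

section
/- Let S ⊆ ℂ ∪ {∞} (the Riemann sphere) be a set containing ∞ that is invariant under the translation z ↦ z + 2 on ℂ. If there exists a bounded open rectangle R ⊆ ℂ such that S ∩ R ≠ ∅ and S ∩ ∂R = ∅, then S is not locally connected at ∞. -/
open OnePoint

private lemma shift_up {S : Set (OnePoint ℂ)}
    (hinv : ∀ z : ℂ, (z : OnePoint ℂ) ∈ S →
      ((z + 2 : ℂ) : OnePoint ℂ) ∈ S ∧ ((z - 2 : ℂ) : OnePoint ℂ) ∈ S)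
    (z : ℂ) (hz : (z : OnePoint ℂ) ∈ S) (n : ℕ) :
    ((z + 2 * n : ℂ) : OnePoint ℂ) ∈ S := by
  induction n with
  | zero => simpa using hz
  | succ k ih =>
      have := (hinv _ ih).1
      have harith : (z + 2 * k + 2 : ℂ) = z + 2 * (k + 1 : ℕ) := by push_cast; ring
      rwa [harith] at this

private lemma shift_down {S : Set (OnePoint ℂ)}
    (hinv : ∀ z : ℂ, (z : OnePoint ℂ) ∈ S →
      ((z + 2 : ℂ) : OnePoint ℂ) ∈ S ∧ ((z - 2 : ℂ) : OnePoint ℂ) ∈ S)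
    (z : ℂ) (n : ℕ) (hz : ((z + 2 * n : ℂ) : OnePoint ℂ) ∈ S) :
    (z : OnePoint ℂ) ∈ S := by
  induction n with
  | zero => simpa using hz
  | succ k ih =>
      apply ih
      have := (hinv _ hz).2
      have harith : (z + 2 * (k + 1 : ℕ) - 2 : ℂ) = z + 2 * k := by push_cast; ring
      rwa [harith] at this

/-- If `S ⊆ ℂ ∪ {∞}` contains `∞`, is invariant under `z ↦ z + 2` (and
`z ↦ z - 2`), and there is a bounded open rectangle `R` with `S ∩ R ≠ ∅` and
`S ∩ ∂R = ∅`, then `S` is not locally connected at `∞`. -/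
theorem stmt0 (S : Set (OnePoint ℂ)) (hinf : (∞ : OnePoint ℂ) ∈ S)
    (hinv : ∀ z : ℂ, (z : OnePoint ℂ) ∈ S →
      ((z + 2 : ℂ) : OnePoint ℂ) ∈ S ∧ ((z - 2 : ℂ) : OnePoint ℂ) ∈ S)
    (a b c d : ℝ) (hab : a < b) (hcd : c < d)
    (R : Set ℂ) (hR : R = {z : ℂ | a < z.re ∧ z.re < b ∧ c < z.im ∧ z.im < d})
    (hmeet : ∃ z : ℂ, z ∈ R ∧ (z : OnePoint ℂ) ∈ S)
    (hbd : ∀ z : ℂ, z ∈ frontier R → (z : OnePoint ℂ) ∉ S) :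
    ¬ (∀ U ∈ nhds (⟨∞, hinf⟩ : S), ∃ V ∈ nhds (⟨∞, hinf⟩ : S), V ⊆ U ∧ IsPreconnected V) := by
  intro h
  obtain ⟨V, hV, -, hVconn⟩ := h Set.univ Filter.univ_mem
  obtain ⟨z₀, hz₀R, hz₀S⟩ := hmeet
  -- R is open
  have hRopen : IsOpen R := by
    rw [hR]
    have : {z : ℂ | a < z.re ∧ z.re < b ∧ c < z.im ∧ z.im < d} =
        (Complex.re ⁻¹' (Set.Ioo a b)) ∩ (Complex.im ⁻¹' (Set.Ioo c d)) := by
      ext z; simp [Set.mem_Ioo, and_assoc]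
    rw [this]
    exact ((isOpen_Ioo).preimage Complex.continuous_re).inter
      ((isOpen_Ioo).preimage Complex.continuous_im)
  -- R is bounded
  have hRbdd : Bornology.IsBounded R := by
    rw [Metric.isBounded_iff_subset_closedBall 0]
    refine ⟨|a| + |b| + |c| + |d|, fun z hz => ?_⟩
    rw [hR] at hz
    obtain ⟨h1, h2, h3, h4⟩ := hz
    simp only [Metric.mem_closedBall, dist_zero_right]
    calc ‖z‖ ≤ |z.re| + |z.im| := Complex.norm_le_abs_re_add_abs_im z
    _ ≤ (|a| + |b|) + (|c| + |d|) := by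
        gcongr
        · exact abs_le.2 ⟨by linarith [neg_abs_le a, abs_nonneg b],
            by linarith [le_abs_self b, abs_nonneg a]⟩
        · exact abs_le.2 ⟨by linarith [neg_abs_le c, abs_nonneg d],
            by linarith [le_abs_self d, abs_nonneg c]⟩
    _ = |a| + |b| + |c| + |d| := by ring
  -- get compact set K from the neighborhood V
  rw [mem_nhds_subtype] at hV
  obtain ⟨t, ht, htV⟩ := hV
  rw [(OnePoint.hasBasis_nhds_infty (X := ℂ)).mem_iff] at ht
  obtain ⟨K, ⟨hKcl, hKcp⟩, hKt⟩ := ht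
  -- pick n with z₀ + 2n outside K
  obtain ⟨r, hr⟩ := hKcp.isBounded.subset_closedBall 0
  obtain ⟨n, hn⟩ := exists_nat_gt ((r + ‖z₀‖) / 2)
  have hout : (z₀ + 2 * n) ∉ K := by
    intro hmem
    have hle : ‖(z₀ + 2 * n : ℂ)‖ ≤ r := mem_closedBall_zero_iff.mp (hr hmem)
    have h1 : ‖(2 * (n : ℂ))‖ ≤ ‖(z₀ + 2 * n : ℂ)‖ + ‖z₀‖ := by
      calc ‖(2 * (n : ℂ))‖ = ‖(z₀ + 2 * n : ℂ) - z₀‖ := by ring_nf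
      _ ≤ ‖(z₀ + 2 * n : ℂ)‖ + ‖z₀‖ := norm_sub_le _ _
    have h2 : ‖(2 * (n : ℂ))‖ = 2 * n := by
      rw [norm_mul]
      simp
    linarith
  -- the shifted rectangle
  set e : ℂ ≃ₜ ℂ := Homeomorph.addRight ((2 * n : ℂ)) with he
  set Rn : Set ℂ := e '' R with hRn
  have hRnopen : IsOpen Rn := e.isOpenMap R hRopen
  have hRncl : closure Rn = e '' closure R := (e.image_closure R).symm
  have hRnfr : frontier Rn = e '' frontier R := (e.image_frontier R).symm
  have hRncp : IsCompact (closure Rn) := by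
    rw [hRncl]
    exact (Metric.isCompact_of_isClosed_isBounded isClosed_closure hRbdd.closure).image
      e.continuous
  -- frontier of Rn misses S
  have hfrS : ∀ z : ℂ, z ∈ frontier Rn → (z : OnePoint ℂ) ∉ S := by
    intro z hz hzS
    rw [hRnfr] at hz
    obtain ⟨w, hw, hwz⟩ := hz
    have : (w : ℂ) + 2 * n = z := hwz
    apply hbd w hw
    exact shift_down hinv w n (by rwa [this])
  -- z₀ + 2n is in V (as image point)
  have hz₀nS : ((z₀ + 2 * n : ℂ) : OnePoint ℂ) ∈ S := shift_up hinv z₀ hz₀S n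
  have hz₀nV : (⟨((z₀ + 2 * n : ℂ) : OnePoint ℂ), hz₀nS⟩ : S) ∈ V := by
    apply htV
    simp only [Set.mem_preimage]
    apply hKt
    left
    exact ⟨z₀ + 2 * n, hout, rfl⟩
  have hz₀nRn : (z₀ + 2 * n) ∈ Rn := ⟨z₀, hz₀R, rfl⟩
  -- ∞ ∈ V
  have hinfV : (⟨∞, hinf⟩ : S) ∈ V := by
    apply htV
    simp only [Set.mem_preimage]
    exact hKt (Or.inr rfl)
  -- W := image of V in OnePoint ℂ, preconnected
  set W : Set (OnePoint ℂ) := Subtype.val '' V with hW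
  have hWconn : IsPreconnected W :=
    hVconn.image _ continuous_subtype_val.continuousOn
  have hWS : W ⊆ S := by rintro x ⟨⟨y, hy⟩, -, rfl⟩; exact hy
  -- the two open sets
  set O₁ : Set (OnePoint ℂ) := (↑) '' Rn with hO₁
  set O₂ : Set (OnePoint ℂ) := ((↑) '' closure Rn)ᶜ with hO₂
  have hO₁open : IsOpen O₁ := OnePoint.isOpen_image_coe.2 hRnopen
  have hO₂open : IsOpen O₂ :=
    OnePoint.isOpen_compl_image_coe.2 ⟨isClosed_closure, hRncp⟩
  have hcover : W ⊆ O₁ ∪ O₂ := by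
    intro x hx
    induction x using OnePoint.rec with
    | infty => exact Or.inr (OnePoint.infty_notMem_image_coe)
    | coe z =>
        by_cases hz : z ∈ closure Rn
        · by_cases hz' : z ∈ Rn
          · exact Or.inl ⟨z, hz', rfl⟩
          · exfalso
            have hzf : z ∈ frontier Rn := by
              rw [frontier, hRnopen.interior_eq]; exact ⟨hz, hz'⟩
            exact hfrS z hzf (hWS hx)
        · refine Or.inr ?_
          rintro ⟨w, hw, hwz⟩
          rw [OnePoint.coe_eq_coe] at hwz
          exact hz (hwz ▸ hw)
  have hne₁ : (W ∩ O₁).Nonempty :=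
    ⟨((z₀ + 2 * n : ℂ) : OnePoint ℂ), ⟨_, hz₀nV, rfl⟩, ⟨z₀ + 2 * n, hz₀nRn, rfl⟩⟩
  have hne₂ : (W ∩ O₂).Nonempty :=
    ⟨∞, ⟨_, hinfV, rfl⟩, OnePoint.infty_notMem_image_coe⟩
  obtain ⟨x, -, hx₁, hx₂⟩ := hWconn O₁ O₂ hO₁open hO₂open hcover hne₁ hne₂
  obtain ⟨w, hw, rfl⟩ := hx₁
  exact hx₂ ⟨w, subset_closure hw, rfl⟩
end

section
/- Let S ⊆ ℂ ∪ {∞} contain ∞, be invariant under z ↦ z + 2, and suppose there is a closed rectangle R ⊆ ℂ of width less than 2 with sides parallel to the axes such that S meets the interior of R but S ∩ ∂R = ∅. Then every neighborhood of ∞ in S that is contained in the complement of the closure of R's horizontal strip translates has infinitely many connected components; in particular S is not locally connected at ∞. -/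
open OnePoint

open Set Filter Topology

lemma key_clopen {S : Set (OnePoint ℂ)} (R : Set ℂ) (hRcl : IsClosed R) (hRcp : IsCompact R)
    (k : ℂ) (W : Set S) (hW : IsPreconnected W)
    (havoid : ∀ x ∈ W, ∀ z : ℂ, (x : OnePoint ℂ) = (z : OnePoint ℂ) → z - k ∉ frontier R)
    (x₀ : S) (hx₀ : x₀ ∈ W) (w : ℂ) (hw : (x₀ : OnePoint ℂ) = (w : OnePoint ℂ))
    (hwR : w - k ∈ interior R) :
    ∀ y ∈ W, ∃ z : ℂ, (y : OnePoint ℂ) = (z : OnePoint ℂ) ∧ z - k ∈ interior R := by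
  set A : Set ℂ := (fun z => z - k) ⁻¹' R with hA
  set B : Set ℂ := (fun z => z - k) ⁻¹' interior R with hB
  have hBopen : IsOpen B := isOpen_interior.preimage (continuous_id.sub continuous_const)
  have hAcl : IsClosed A := hRcl.preimage (continuous_id.sub continuous_const)
  have hAcp : IsCompact A := by
    have : A = (fun z => z + k) '' R := by
      ext z
      constructor
      · intro hz; exact ⟨z - k, hz, by ring⟩
      · rintro ⟨y, hy, rfl⟩; simpa [hA] using hy
    rw [this]
    exact hRcp.image (continuous_id.add continuous_const)
  set u : Set S := Subtype.val ⁻¹' ((↑) '' B) with hu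
  set v : Set S := Subtype.val ⁻¹' (((↑) '' A : Set (OnePoint ℂ))ᶜ) with hv
  have huo : IsOpen u := (OnePoint.isOpenEmbedding_coe.isOpenMap _ hBopen).preimage continuous_subtype_val
  have hvo : IsOpen v :=
    (OnePoint.isOpen_compl_image_coe.2 ⟨hAcl, hAcp⟩).preimage continuous_subtype_val
  have hsub : W ⊆ u ∪ v := by
    intro y hy
    by_cases hI : (y : OnePoint ℂ) = ∞
    · right
      simp only [hv, mem_preimage, mem_compl_iff, hI]
      exact OnePoint.infty_notMem_image_coe
    · obtain ⟨z, hz⟩ : ∃ z : ℂ, (y : OnePoint ℂ) = (z : OnePoint ℂ) := by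
        cases hc : (y : OnePoint ℂ) with
        | infty => exact absurd hc hI
        | coe z => exact ⟨z, rfl⟩
      by_cases hzA : z - k ∈ R
      · left
        have : z - k ∈ interior R := by
          have hfr := havoid y hy z hz
          have : frontier R = R \ interior R := hRcl.frontier_eq
          by_contra hint
          exact hfr (by rw [this]; exact ⟨hzA, hint⟩)
        exact mem_preimage.2 ⟨z, this, hz.symm⟩
      · right
        simp only [hv, mem_preimage, mem_compl_iff]
        rintro ⟨z', hz', hzz'⟩
        rw [hz] at hzz'
        exact hzA ((OnePoint.coe_injective hzz') ▸ hz')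
  have huW : (W ∩ u).Nonempty := ⟨x₀, hx₀, mem_preimage.2 ⟨w, hwR, hw.symm⟩⟩
  have hvW : W ∩ v = ∅ := by
    by_contra h
    obtain ⟨p, hpW, hpu, hpv⟩ := hW u v huo hvo hsub huW (nonempty_iff_ne_empty.2 h)
    obtain ⟨z, hzB, hz⟩ := hpu
    refine hpv ⟨z, ?_, hz⟩
    simp only [hA, mem_preimage]
    exact interior_subset (by simpa [hB] using hzB)
  intro y hy
  rcases hsub hy with hyu | hyv
  · obtain ⟨z, hzB, hz⟩ := hyu
    exact ⟨z, hz.symm, hzB⟩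
  · exact absurd (mem_inter hy hyv) (by simp [hvW])

/-- If `S ⊆ ℂ ∪ {∞}` contains `∞`, is translation invariant under `z ↦ z ± 2`,
and there is a closed axis-parallel rectangle `R` of width `< 2` such that `S` meets the
interior of `R` but misses `∂R`, then every neighborhood of `∞` in `S` avoiding all the
translates of `∂R` has infinitely many connected components; in particular `S` is not
locally connected at `∞`. -/
theorem stmt1 (S : Set (OnePoint ℂ)) (hinf : (∞ : OnePoint ℂ) ∈ S)
    (hinv : ∀ z : ℂ, (z : OnePoint ℂ) ∈ S →
      ((z + 2 : ℂ) : OnePoint ℂ) ∈ S ∧ ((z - 2 : ℂ) : OnePoint ℂ) ∈ S)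
    (a b c d : ℝ) (hab : a < b) (hwidth : b - a < 2) (hcd : c < d)
    (R : Set ℂ) (hR : R = {z : ℂ | a ≤ z.re ∧ z.re ≤ b ∧ c ≤ z.im ∧ z.im ≤ d})
    (hmeet : ∃ z : ℂ, z ∈ interior R ∧ (z : OnePoint ℂ) ∈ S)
    (hbd : ∀ z : ℂ, z ∈ frontier R → (z : OnePoint ℂ) ∉ S) :
    (∀ V ∈ nhds (⟨∞, hinf⟩ : S),
      (∀ x ∈ V, ∀ z : ℂ, (x : S).1 = (z : OnePoint ℂ) →
        ∀ n : ℤ, z - 2 * (n : ℂ) ∉ frontier R) →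
      {C : Set S | ∃ x ∈ V, C = connectedComponentIn V x}.Infinite) ∧
    ¬ (∀ U ∈ nhds (⟨∞, hinf⟩ : S), ∃ V ∈ nhds (⟨∞, hinf⟩ : S), V ⊆ U ∧ IsPreconnected V) := by
  obtain ⟨z₀, hz₀int, hz₀S⟩ := hmeet
  have hz₀R : z₀ ∈ R := interior_subset hz₀int
  -- R is closed and compact
  have hset : R = Complex.re ⁻¹' (Set.Icc a b) ∩ Complex.im ⁻¹' (Set.Icc c d) := by
    rw [hR]; ext z; simp [Set.mem_Icc]; tauto
  have hRcl : IsClosed R := by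
    rw [hset]
    exact (isClosed_Icc.preimage Complex.continuous_re).inter
      (isClosed_Icc.preimage Complex.continuous_im)
  have hRcp : IsCompact R := by
    refine Metric.isCompact_of_isClosed_isBounded hRcl ?_
    rw [isBounded_iff_forall_norm_le]
    refine ⟨|a| + |b| + |c| + |d|, fun z hz => ?_⟩
    rw [hR] at hz
    obtain ⟨h1, h2, h3, h4⟩ := hz
    have hre : |z.re| ≤ |a| + |b| := by
      rw [abs_le]
      constructor
      · have := neg_abs_le a; have := abs_nonneg b; linarith
      · have := le_abs_self b; have := abs_nonneg a; linarith
    have him : |z.im| ≤ |c| + |d| := by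
      rw [abs_le]
      constructor
      · have := neg_abs_le c; have := abs_nonneg d; linarith
      · have := le_abs_self d; have := abs_nonneg c; linarith
    calc ‖z‖ ≤ |z.re| + |z.im| := by
              exact Complex.norm_le_abs_re_add_abs_im z
      _ ≤ |a| + |b| + (|c| + |d|) := add_le_add hre him
      _ = |a| + |b| + |c| + |d| := by ring
  -- S is invariant under z + 2k, k : ℤ
  have hSZ : ∀ z : ℂ, (z : OnePoint ℂ) ∈ S → ∀ k : ℤ, ((z + 2 * k : ℂ) : OnePoint ℂ) ∈ S := by
    intro z hz k
    induction k using Int.induction_on with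
    | zero => simpa using hz
    | succ n ih =>
        rw [show (z + 2 * ((n : ℤ) + 1 : ℤ) : ℂ) = (z + 2 * (n : ℤ)) + 2 by push_cast; ring]
        exact (hinv _ ih).1
    | pred n ih =>
        rw [show (z + 2 * (-(n : ℤ) - 1 : ℤ) : ℂ) = (z + 2 * (-(n : ℤ) : ℤ)) - 2 by
          push_cast; ring]
        exact (hinv _ ih).2
  have havoidS : ∀ z : ℂ, (z : OnePoint ℂ) ∈ S → ∀ k : ℤ, z - 2 * (k : ℂ) ∉ frontier R := by
    intro z hz k hf
    refine hbd _ hf ?_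
    have := hSZ z hz (-k)
    rw [show (z + 2 * ((-k : ℤ) : ℂ) : ℂ) = z - 2 * (k : ℂ) by push_cast; ring] at this
    exact this
  have hS : ∀ m : ℕ, ((z₀ + 2 * m : ℂ) : OnePoint ℂ) ∈ S := by
    intro m
    have := hSZ z₀ hz₀S (m : ℤ)
    rwa [show (z₀ + 2 * ((m : ℤ) : ℂ) : ℂ) = z₀ + 2 * (m : ℂ) by push_cast; ring] at this
  set seq : ℕ → S := fun m => ⟨((z₀ + 2 * m : ℂ) : OnePoint ℂ), hS m⟩ with hseq
  have htend : Filter.Tendsto seq Filter.atTop (nhds (⟨∞, hinf⟩ : S)) := by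
    rw [tendsto_subtype_rng]
    refine OnePoint.tendsto_coe_infty.comp ?_
    rw [Filter.coclosedCompact_eq_cocompact]
    refine tendsto_cocompact_of_tendsto_dist_comp_atTop (0 : ℂ) ?_
    have h2 : Filter.Tendsto (fun m : ℕ => 2 * (m : ℝ) - ‖z₀‖) Filter.atTop Filter.atTop := by
      apply Filter.tendsto_atTop_add_const_right
      exact (tendsto_natCast_atTop_atTop (R := ℝ)).const_mul_atTop two_pos
    refine Filter.tendsto_atTop_mono (fun m => ?_) h2
    have hnn : ‖(2 * (m : ℂ) : ℂ)‖ = 2 * (m : ℝ) := by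
      rw [norm_mul]; simp
    have := norm_sub_norm_le (2 * (m : ℂ)) (-z₀)
    simp only [norm_neg] at this
    have heq : (2 * (m : ℂ)) - (-z₀) = z₀ + 2 * m := by ring
    rw [heq, hnn] at this
    simpa [dist_eq_norm] using this
  have hpt : ∀ (m : ℕ) (k : ℂ), ((seq m : OnePoint ℂ) : OnePoint ℂ) = (((z₀ + 2 * m : ℂ)) : OnePoint ℂ) := fun m k => rfl
  constructor
  · intro V hV havoidV
    obtain ⟨N, hN⟩ := Filter.eventually_atTop.1 (htend.eventually_mem hV)
    set f : ℕ → Set S := fun n => connectedComponentIn V (seq (N + n)) with hf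
    apply Set.infinite_of_injective_forall_mem (f := f)
    · intro n m hnm
      -- apply key lemma with k = 2*(N+n)
      have hWsub : f n ⊆ V := connectedComponentIn_subset _ _
      have hkey := key_clopen R hRcl hRcp (2 * ((N + n : ℕ) : ℂ)) (f n)
        isPreconnected_connectedComponentIn
        (fun x hx z hz => by
          have := havoidV x (hWsub hx) z hz ((N + n : ℕ) : ℤ)
          rwa [show ((((N + n : ℕ) : ℤ)) : ℂ) = ((N + n : ℕ) : ℂ) by push_cast; ring] at this)
        (seq (N + n)) (mem_connectedComponentIn (hN _ (Nat.le_add_right N n)))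
        (z₀ + 2 * ((N + n : ℕ) : ℂ)) rfl
        (by rw [add_sub_cancel_right]; exact hz₀int)
      have hmem : seq (N + m) ∈ f n := by
        rw [hnm]
        exact mem_connectedComponentIn (hN _ (Nat.le_add_right N m))
      obtain ⟨z, hz1, hz2⟩ := hkey _ hmem
      have hzeq : z = z₀ + 2 * ((N + m : ℕ) : ℂ) := (OnePoint.coe_injective hz1).symm
      rw [hzeq] at hz2
      have h5 : z₀ + 2 * ((N + m : ℕ) : ℂ) - 2 * ((N + n : ℕ) : ℂ) ∈ R := interior_subset hz2
      rw [hR] at h5 hz₀R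
      obtain ⟨ha1, hb1, -⟩ := h5
      obtain ⟨ha0, hb0, -⟩ := hz₀R
      have hre : (z₀ + 2 * ((N + m : ℕ) : ℂ) - 2 * ((N + n : ℕ) : ℂ)).re
          = z₀.re + 2 * (m : ℝ) - 2 * (n : ℝ) := by
        simp [Complex.add_re, Complex.sub_re, Complex.mul_re]
        push_cast
        ring
      rw [hre] at ha1 hb1
      rcases Nat.lt_trichotomy n m with h | h | h
      · exfalso
        have : (n : ℝ) + 1 ≤ (m : ℝ) := by exact_mod_cast Nat.succ_le_of_lt h
        linarith
      · exact (by omega : n = m) ▸ rfl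
      · exfalso
        have : (m : ℝ) + 1 ≤ (n : ℝ) := by exact_mod_cast Nat.succ_le_of_lt h
        linarith
    · intro n
      exact ⟨seq (N + n), hN _ (Nat.le_add_right N n), rfl⟩
  · intro H
    obtain ⟨V, hV, -, hVpc⟩ := H Set.univ Filter.univ_mem
    obtain ⟨N, hN⟩ := Filter.eventually_atTop.1 (htend.eventually_mem hV)
    have hx₀ : seq N ∈ V := hN N le_rfl
    have hinfV : (⟨∞, hinf⟩ : S) ∈ V := mem_of_mem_nhds hV
    have hkey := key_clopen R hRcl hRcp (2 * ((N : ℕ) : ℂ)) V hVpc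
      (fun x hx z hz => by
        have := havoidS z (by rw [← hz]; exact x.2) ((N : ℕ) : ℤ)
        rwa [show ((((N : ℕ) : ℤ)) : ℂ) = ((N : ℕ) : ℂ) by push_cast; ring] at this)
      (seq N) hx₀ (z₀ + 2 * ((N : ℕ) : ℂ)) rfl
      (by rw [add_sub_cancel_right]; exact hz₀int)
    obtain ⟨z, hz1, -⟩ := hkey ⟨∞, hinf⟩ hinfV
    exact OnePoint.coe_ne_infty z hz1.symm
end
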